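/- Let n ≥ 2 and let ξ₀ be the unique real number with det M₁(ξ₀) = 0, where M₁(ξ) is the n×n symmetric matrix with (1,1) entry ξ and all other entries 1/((i + j − 1)(i + j)). Then for every z > ξ₀, the matrix M₁(z) is positive definite. -/

import Mathlib

open Matrix intervalIntegral

lemma int_pow_one_sub (k : ℕ) :
    ∫ t in (0:ℝ)..1, t ^ k * (1 - t)
      = 1 / (((k + 1 : ℕ) : ℝ) * ((k + 2 : ℕ) : ℝ)) := by
  have h : ∀ t : ℝ, t ^ k * (1 - t) = t ^ k - t ^ (k + 1) := by
    intro t; ring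
  simp only [h]
  rw [intervalIntegral.integral_sub ((continuous_pow k).intervalIntegrable 0 1)
    ((continuous_pow (k+1)).intervalIntegrable 0 1), integral_pow, integral_pow]
  push_cast
  have h1 : (k:ℝ) + 1 ≠ 0 := by positivity
  have h2 : (k:ℝ) + 2 ≠ 0 := by positivity
  field_simp
  ring_nf

lemma quad_eq_integral (n : ℕ) (x : Fin n → ℝ) :
    ∑ i, ∑ j, x i * ((1:ℝ) / (((i.1 + j.1 + 1 : ℕ) : ℝ) * ((i.1 + j.1 + 2 : ℕ) : ℝ))) * x j
      = ∫ t in (0:ℝ)..1, (∑ i, x i * t ^ (i : ℕ)) ^ 2 * (1 - t) := by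
  have h : ∀ t : ℝ, (∑ i, x i * t ^ (i : ℕ)) ^ 2 * (1 - t)
      = ∑ i : Fin n, ∑ j : Fin n, x i * x j * (t ^ ((i:ℕ)+(j:ℕ)) * (1 - t)) := by
    intro t
    rw [sq, Finset.sum_mul_sum, Finset.sum_mul]
    congr 1; ext i
    rw [Finset.sum_mul]
    congr 1; ext j
    rw [pow_add]; ring
  simp only [h]
  rw [intervalIntegral.integral_finset_sum]
  · congr 1; ext i
    rw [intervalIntegral.integral_finset_sum]
    · congr 1; ext j
      rw [intervalIntegral.integral_const_mul, int_pow_one_sub]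
      push_cast
      ring
    · intro j _
      exact (Continuous.intervalIntegrable (by continuity) 0 1)
  · intro i _
    exact (Continuous.intervalIntegrable (by continuity) 0 1)

lemma gram_posdef (n : ℕ) :
    (Matrix.of fun i j : Fin n =>
      (1:ℝ) / (((i.1 + j.1 + 1 : ℕ) : ℝ) * ((i.1 + j.1 + 2 : ℕ) : ℝ))).PosDef := by
  rw [Matrix.posDef_iff_dotProduct_mulVec]
  constructor
  · ext i j
    simp [Matrix.conjTranspose_apply, Nat.add_comm j.1 i.1]
    ring
  · intro x hx
    have hquad : x ⬝ᵥ ((Matrix.of fun i j : Fin n =>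
        (1:ℝ) / (((i.1 + j.1 + 1 : ℕ) : ℝ) * ((i.1 + j.1 + 2 : ℕ) : ℝ))) *ᵥ x)
        = ∑ i, ∑ j, x i * ((1:ℝ) / (((i.1 + j.1 + 1 : ℕ) : ℝ) * ((i.1 + j.1 + 2 : ℕ) : ℝ))) * x j := by
      simp [dotProduct, mulVec, Finset.mul_sum, mul_assoc]
    set P : Polynomial ℝ := ∑ i : Fin n, Polynomial.C (x i) * Polynomial.X ^ (i : ℕ) with hP
    have heval : ∀ t : ℝ, P.eval t = ∑ i, x i * t ^ (i : ℕ) := by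
      intro t; simp [hP, Polynomial.eval_finset_sum]
    have hPne : P ≠ 0 := by
      obtain ⟨i, hi⟩ := Function.ne_iff.mp hx
      intro h
      apply hi
      have : P.coeff (i : ℕ) = x i := by
        simp only [hP, Polynomial.finset_sum_coeff, Polynomial.coeff_C_mul,
          Polynomial.coeff_X_pow]
        rw [Finset.sum_eq_single i]
        · simp
        · intro j _ hj
          have : (i : ℕ) ≠ (j : ℕ) := fun hh => hj (Fin.ext hh).symm
          simp [this]
        · simp
      rw [h] at this
      simpa using this.symm
    obtain ⟨t₀, ht₀⟩ := ((Set.Ioo_infinite (by norm_num : (0:ℝ) < 1)).diff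
      (Polynomial.finite_setOf_isRoot hPne)).nonempty
    obtain ⟨⟨ht0, ht1⟩, htr⟩ := ht₀
    have hne : P.eval t₀ ≠ 0 := htr
    have hpos : 0 < ∫ t in (0:ℝ)..1, (∑ i, x i * t ^ (i : ℕ)) ^ 2 * (1 - t) := by
      apply intervalIntegral.integral_pos (by norm_num)
      · exact (Continuous.continuousOn (by continuity))
      · intro t ht
        have : t ≤ 1 := ht.2
        have h2 : (0:ℝ) ≤ 1 - t := by linarith
        positivity
      · refine ⟨t₀, ⟨le_of_lt ht0, le_of_lt ht1⟩, ?_⟩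
        have h1 : (0:ℝ) < (∑ i, x i * t₀ ^ (i : ℕ)) ^ 2 := by
          rw [← heval]
          exact lt_of_le_of_ne (sq_nonneg _) (Ne.symm (pow_ne_zero 2 hne))
        have h2 : (0:ℝ) < 1 - t₀ := by linarith
        exact mul_pos h1 h2
    rw [star_trivial, hquad, quad_eq_integral]
    exact hpos

theorem stmt12 (n : ℕ) (hn : 2 ≤ n)
    (M₁ : ℝ → Matrix (Fin n) (Fin n) ℝ)
    (hM₁ : ∀ ξ, M₁ ξ = Matrix.of fun i j : Fin n =>
      if i.val = 0 ∧ j.val = 0 then ξ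
      else (1 : ℝ) / (((i.val + j.val + 1 : ℕ) : ℝ) * ((i.val + j.val + 2 : ℕ) : ℝ)))
    (ξ₀ : ℝ) (hroot : (M₁ ξ₀).det = 0)
    (huniq : ∀ ξ : ℝ, (M₁ ξ).det = 0 → ξ = ξ₀) :
    ∀ z : ℝ, ξ₀ < z → (M₁ z).PosDef := by
  haveI : NeZero n := ⟨by omega⟩
  have hval : ∀ i : Fin n, i.val = 0 ↔ i = 0 := by
    intro i
    constructor
    · exact fun h => Fin.ext (by simpa using h)
    · rintro rfl; simp
  set H : Matrix (Fin n) (Fin n) ℝ := Matrix.of fun i j : Fin n =>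
      (1:ℝ) / (((i.1 + j.1 + 1 : ℕ) : ℝ) * ((i.1 + j.1 + 2 : ℕ) : ℝ)) with hHdef
  have hH : H.PosDef := gram_posdef n
  set E : Matrix (Fin n) (Fin n) ℝ :=
    Matrix.of fun i j : Fin n => if i = 0 ∧ j = 0 then (1:ℝ) else 0 with hEdef
  -- decomposition
  have hdec : ∀ ξ, M₁ ξ = H + (ξ - 1/2) • E := by
    intro ξ
    rw [hM₁]
    ext i j
    rcases eq_or_ne i 0 with hi | hi <;> rcases eq_or_ne j 0 with hj | hj <;>
      simp [hHdef, hEdef, hi, hj, hval] <;> norm_num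
  -- E action
  have hEmul : ∀ y : Fin n → ℝ, E *ᵥ y = fun i => if i = 0 then y 0 else 0 := by
    intro y; ext i
    simp [hEdef, mulVec, dotProduct, ite_and]
  have hEquad : ∀ y : Fin n → ℝ, y ⬝ᵥ (E *ᵥ y) = (y 0)^2 := by
    intro y
    rw [hEmul]
    simp [dotProduct]
    ring
  -- quadratic form of M₁ ξ
  have hquad : ∀ ξ, ∀ y : Fin n → ℝ,
      y ⬝ᵥ ((M₁ ξ) *ᵥ y) = y ⬝ᵥ (H *ᵥ y) + (ξ - 1/2) * (y 0)^2 := by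
    intro ξ y
    rw [hdec, Matrix.add_mulVec, Matrix.smul_mulVec, dotProduct_add,
      dotProduct_smul, hEquad]
    simp
  -- the vector v
  have hdetH : H.det ≠ 0 := ne_of_gt hH.det_pos
  set v : Fin n → ℝ := H⁻¹ *ᵥ Pi.single 0 1 with hvdef
  have hHv : H *ᵥ v = Pi.single 0 1 := by
    rw [hvdef, Matrix.mulVec_mulVec, Matrix.mul_nonsing_inv H (isUnit_iff_ne_zero.mpr hdetH),
      Matrix.one_mulVec]
  set α : ℝ := v 0 with hαdef
  have hsym : Hᵀ = H := by
    ext i j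
    simp [hHdef, Nat.add_comm j.1 i.1]
    ring
  have hvHv : v ⬝ᵥ (H *ᵥ v) = α := by
    rw [hHv, dotProduct_single, mul_one]
  have hvne : v ≠ 0 := by
    intro h
    have := hHv
    rw [h, Matrix.mulVec_zero] at this
    have := congrFun this 0
    simp at this
  have hα : 0 < α := by
    have := hH.dotProduct_mulVec_pos hvne
    rwa [star_trivial, hvHv] at this
  -- x 0 = v ⬝ᵥ H *ᵥ x
  have hx0 : ∀ x : Fin n → ℝ, v ⬝ᵥ (H *ᵥ x) = x 0 := by
    intro x
    rw [Matrix.dotProduct_mulVec, ← hsym, Matrix.vecMul_transpose, hHv,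
      single_dotProduct, one_mul]
  -- ξ₀ = 1/2 - 1/α
  have hnull : (M₁ (1/2 - 1/α)) *ᵥ v = 0 := by
    rw [hdec, Matrix.add_mulVec, Matrix.smul_mulVec, hHv, hEmul]
    ext i
    by_cases hi : i = 0
    · subst hi
      simp [← hαdef]
      field_simp
      norm_num
    · simp [hi]
  have hξ₀ : ξ₀ = 1/2 - 1/α := by
    refine (huniq _ ?_).symm
    exact (Matrix.exists_mulVec_eq_zero_iff).mp ⟨v, hvne, hnull⟩
  -- Cauchy-Schwarz
  have hCS : ∀ x : Fin n → ℝ, (x 0)^2 ≤ α * (x ⬝ᵥ (H *ᵥ x)) := by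
    intro x
    set s : ℝ := v ⬝ᵥ (H *ᵥ x) with hsdef
    set c : ℝ := x ⬝ᵥ (H *ᵥ x) with hcdef
    have hxHv : x ⬝ᵥ (H *ᵥ v) = s := by
      rw [hsdef, hx0, hHv, dotProduct_single, mul_one]
    have hq : ∀ t : ℝ, 0 ≤ α * (t * t) + (2*s) * t + c := by
      intro t
      have := hH.posSemidef.dotProduct_mulVec_nonneg (t • v + x)
      rw [star_trivial] at this
      calc (0:ℝ) ≤ (t • v + x) ⬝ᵥ (H *ᵥ (t • v + x)) := this
        _ = α * (t * t) + (2*s) * t + c := by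
            rw [Matrix.mulVec_add, Matrix.mulVec_smul, dotProduct_add, add_dotProduct,
              add_dotProduct, smul_dotProduct, smul_dotProduct, dotProduct_smul,
              dotProduct_smul, hvHv, hxHv]
            simp only [smul_eq_mul]
            rw [hsdef]
            ring
    have hd := discrim_le_zero hq
    rw [discrim] at hd
    rw [← hx0 x, ← hsdef]
    nlinarith [hd]
  -- conclusion
  intro z hz
  rw [Matrix.posDef_iff_dotProduct_mulVec]
  constructor
  · rw [hM₁]
    ext i j
    rcases eq_or_ne i 0 with hi | hi <;> rcases eq_or_ne j 0 with hj | hj <;>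
      simp [Matrix.conjTranspose_apply, hi, hj, hval,
        Nat.add_comm j.1 i.1] <;> ring
  · intro x hx
    rw [star_trivial, hquad]
    have hc : 0 < x ⬝ᵥ (H *ᵥ x) := by
      have := hH.dotProduct_mulVec_pos hx
      rwa [star_trivial] at this
    have hcs := hCS x
    have h0 : -(1/α) < z - 1/2 := by
      rw [hξ₀] at hz
      linarith
    have ht : (-1 : ℝ) < (z - 1/2) * α := by
      have h2 := mul_lt_mul_of_pos_right h0 hα
      rw [neg_mul, one_div, inv_mul_cancel₀ (ne_of_gt hα)] at h2
      linarith
    rcases le_or_gt 0 (z - 1/2) with h | h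
    · nlinarith [mul_nonneg h (sq_nonneg (x 0))]
    · nlinarith [mul_le_mul_of_nonpos_left hcs h.le,
        mul_pos hc (by linarith : (0:ℝ) < 1 + (z - 1/2) * α)]
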